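/- Let p_1, …, p_m be the first m odd prime numbers and let a_1, …, a_m, b ∈ ℤ. For each k define the periodic selector sequence σ_k(n) = 1 if n ≡ 1 (mod p_k) and σ_k(n) = 0 otherwise, and define τ(n) = b − ∑_{k=1}^m a_k·σ_k(n). Then there exists an odd prime p with τ(p) = 0 if and only if there exists a subset S ⊆ {1, …, m} with ∑_{k∈S} a_k = b. -/

import Mathlib

lemma nth_prime_odd_ge (k : ℕ) : 3 ≤ Nat.nth Nat.Prime (k + 1) := by
  have := Nat.add_two_le_nth_prime (k + 1); omega

/-- Let `p_1, …, p_m` be the first `m` odd primes (`Nat.nth Nat.Prime (k+1)` for `k < m`),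
and `a_1, …, a_m, b ∈ ℤ`.  Define selectors `σ_k(n) = 1` if `n ≡ 1 (mod p_k)` and `0`
otherwise, and `τ(n) = b - ∑ k, a_k * σ_k(n)`.  Then there exists an odd prime `p` with
`τ(p) = 0` if and only if some subset `S ⊆ {1, …, m}` satisfies `∑_{k ∈ S} a_k = b`. -/
theorem skolem_prime_subset_sum_reduction
    (m : ℕ) (a : Fin m → ℤ) (b : ℤ)
    (σ : Fin m → ℕ → ℤ)
    (hσ : ∀ k n, σ k n = if n % Nat.nth Nat.Prime (k + 1) = 1 then 1 else 0)
    (τ : ℕ → ℤ)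
    (hτ : ∀ n, τ n = b - ∑ k, a k * σ k n) :
    (∃ p : ℕ, p.Prime ∧ Odd p ∧ τ p = 0) ↔ ∃ S : Finset (Fin m), ∑ k ∈ S, a k = b := by
  set P : Fin m → ℕ := fun k => Nat.nth Nat.Prime ((k : ℕ) + 1) with hP
  have hPprime : ∀ k, (P k).Prime := fun k => Nat.prime_nth_prime _
  have hP3 : ∀ k, 3 ≤ P k := fun k => nth_prime_odd_ge k
  have key : ∀ p : ℕ, τ p = b - ∑ k ∈ Finset.univ.filter (fun k => p % P k = 1), a k := by
    intro p
    rw [hτ, Finset.sum_filter]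
    congr 1
    apply Finset.sum_congr rfl
    intro k _
    rw [hσ]
    by_cases h : p % P k = 1 <;> simp [h, hP]
  constructor
  · rintro ⟨p, -, -, hp0⟩
    exact ⟨Finset.univ.filter (fun k => p % P k = 1), by have := key p; rw [this] at hp0; omega⟩
  · rintro ⟨S, hS⟩
    have cop : Pairwise (Function.onFun Nat.Coprime P) := by
      intro i j hij
      exact (Nat.coprime_primes (hPprime i) (hPprime j)).mpr
        (fun h => hij (by
          have := Nat.nth_injective (p := Nat.Prime) Nat.infinite_setOf_prime h
          exact Fin.ext (by omega)))
    set N := ∏ k, P k with hN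
    have hNpos : 0 < N := Finset.prod_pos (fun k _ => (hPprime k).pos)
    haveI : NeZero N := ⟨hNpos.ne'⟩
    let e := ZMod.prodEquivPi P cop
    set r : Π k, ZMod (P k) := fun k => if k ∈ S then 1 else 2 with hr
    set a0 : ZMod N := e.symm r with ha0
    have hrk : ∀ k, IsUnit (r k) := by
      intro k
      haveI : Fact (P k).Prime := ⟨hPprime k⟩
      rw [isUnit_iff_ne_zero]
      by_cases h : k ∈ S <;> simp only [hr, h, if_true, if_false]
      · exact one_ne_zero
      · intro h2
        have h22 : ((2 : ℕ) : ZMod (P k)) = 0 := by push_cast; exact h2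
        rw [ZMod.natCast_eq_zero_iff] at h22
        have := Nat.le_of_dvd (by norm_num) h22
        have := hP3 k
        omega
    have hrunit : IsUnit r := by
      choose u hu using hrk
      exact ⟨⟨r, fun k => ↑(u k)⁻¹,
        funext fun k => by simp [← hu k],
        funext fun k => by simp [← hu k]⟩, rfl⟩
    have haunit : IsUnit a0 := by
      rw [ha0]
      exact hrunit.map e.symm
    obtain ⟨p, hp1, hp2⟩ := Set.infinite_iff_exists_gt.mp
      (Nat.infinite_setOfPred_prime_and_eq_mod haunit) 2
    obtain ⟨hpp, hpmod⟩ := hp1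
    have hcomp : ∀ k, ((p : ℕ) : ZMod (P k)) = r k := by
      intro k
      have : e ((p : ℕ) : ZMod N) = e a0 := by rw [hpmod]
      rw [map_natCast, ha0, RingEquiv.apply_symm_apply] at this
      have := congrFun this k
      simpa using this
    have hmod : ∀ k, p % P k = 1 ↔ k ∈ S := by
      intro k
      have hc := hcomp k
      by_cases h : k ∈ S
      · simp only [hr, h, if_true] at hc
        have : ((p : ℕ) : ZMod (P k)) = ((1 : ℕ) : ZMod (P k)) := by push_cast; exact hc
        rw [ZMod.natCast_eq_natCast_iff] at this
        have h1 : 1 % P k = 1 := Nat.mod_eq_of_lt (by have := hP3 k; omega)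
        unfold Nat.ModEq at this
        simp [h, this, h1]
      · simp only [hr, h, if_false] at hc
        have : ((p : ℕ) : ZMod (P k)) = ((2 : ℕ) : ZMod (P k)) := by push_cast; exact hc
        rw [ZMod.natCast_eq_natCast_iff] at this
        have h1 : 2 % P k = 2 := Nat.mod_eq_of_lt (by have := hP3 k; omega)
        unfold Nat.ModEq at this
        simp only [h, iff_false]
        omega
    refine ⟨p, hpp, hpp.odd_of_ne_two (by omega), ?_⟩
    rw [key p]
    have : Finset.univ.filter (fun k => p % P k = 1) = S := by
      ext k; simp [hmod k]
    rw [this, hS]; ring
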